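/- Let M, K be symmetric positive definite real m×m matrices with c₁ h² ≤ (xᵀ M x)/(xᵀ x) ≤ c₂ h² and d₁ h² ≤ (xᵀ K x)/(xᵀ x) ≤ d₂ for all nonzero x ∈ ℝ^m. Then (d₁² h²)/c₂ ≤ (xᵀ K M^{-1} K x)/(xᵀ x) ≤ d₂²/(c₁ h²) for all nonzero x ∈ ℝ^m. -/

import Mathlib

open Matrix

lemma aux_symm_dot {m : ℕ} {M : Matrix (Fin m) (Fin m) ℝ} (hM : Mᵀ = M)
    (u v : Fin m → ℝ) : u ⬝ᵥ (M *ᵥ v) = v ⬝ᵥ (M *ᵥ u) := by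
  rw [Matrix.dotProduct_mulVec, ← Matrix.mulVec_transpose, hM, dotProduct_comm]

lemma aux_cs {m : ℕ} {M : Matrix (Fin m) (Fin m) ℝ} (hM : M.PosSemidef)
    (u v : Fin m → ℝ) :
    (u ⬝ᵥ (M *ᵥ v))^2 ≤ (u ⬝ᵥ (M *ᵥ u)) * (v ⬝ᵥ (M *ᵥ v)) := by
  have hsym : Mᵀ = M := by
    have := hM.isHermitian
    rwa [Matrix.IsHermitian, Matrix.conjTranspose_eq_transpose_of_trivial] at this
  have key : discrim (v ⬝ᵥ (M *ᵥ v)) (2 * (u ⬝ᵥ (M *ᵥ v))) (u ⬝ᵥ (M *ᵥ u)) ≤ 0 := by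
    apply discrim_le_zero
    intro t
    have h0 := hM.dotProduct_mulVec_nonneg (u + t • v)
    simp only [star_trivial] at h0
    have hexp : (u + t • v) ⬝ᵥ (M *ᵥ (u + t • v)) =
        (v ⬝ᵥ (M *ᵥ v)) * (t * t) + (2 * (u ⬝ᵥ (M *ᵥ v))) * t + (u ⬝ᵥ (M *ᵥ u)) := by
      rw [Matrix.mulVec_add, Matrix.mulVec_smul]
      simp only [dotProduct_add, add_dotProduct, dotProduct_smul, smul_dotProduct,
        smul_eq_mul]
      rw [aux_symm_dot hsym v u]
      ring
    linarith [hexp ▸ h0]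
  rw [discrim] at key
  nlinarith [key]

lemma aux_cs' {m : ℕ} (u v : Fin m → ℝ) :
    (u ⬝ᵥ v)^2 ≤ (u ⬝ᵥ u) * (v ⬝ᵥ v) := by
  have := aux_cs (Matrix.PosSemidef.one (n := Fin m) (R := ℝ)) u v
  simpa using this

set_option maxHeartbeats 1000000 in
theorem stmt_6 {m : ℕ} (M K : Matrix (Fin m) (Fin m) ℝ)
    (hM : M.PosDef) (hK : K.PosDef)
    (c₁ c₂ d₁ d₂ h : ℝ) (hc₁ : 0 < c₁) (hc₂ : 0 < c₂)
    (hd₁ : 0 < d₁) (hd₂ : 0 < d₂) (hh : 0 < h)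
    (hMbound : ∀ x : Fin m → ℝ, x ≠ 0 →
      c₁ * h ^ 2 ≤ (x ⬝ᵥ (M *ᵥ x)) / (x ⬝ᵥ x) ∧
      (x ⬝ᵥ (M *ᵥ x)) / (x ⬝ᵥ x) ≤ c₂ * h ^ 2)
    (hKbound : ∀ x : Fin m → ℝ, x ≠ 0 →
      d₁ * h ^ 2 ≤ (x ⬝ᵥ (K *ᵥ x)) / (x ⬝ᵥ x) ∧
      (x ⬝ᵥ (K *ᵥ x)) / (x ⬝ᵥ x) ≤ d₂) :
    ∀ x : Fin m → ℝ, x ≠ 0 →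
      d₁ ^ 2 * h ^ 2 / c₂ ≤ (x ⬝ᵥ ((K * M⁻¹ * K) *ᵥ x)) / (x ⬝ᵥ x) ∧
      (x ⬝ᵥ ((K * M⁻¹ * K) *ᵥ x)) / (x ⬝ᵥ x) ≤ d₂ ^ 2 / (c₁ * h ^ 2) := by
  intro x hx
  have hKsym : Kᵀ = K := by
    have := hK.isHermitian
    rwa [Matrix.IsHermitian, Matrix.conjTranspose_eq_transpose_of_trivial] at this
  have hMN : M * M⁻¹ = 1 := Matrix.mul_nonsing_inv M hM.det_pos.ne'.isUnit
  have hNpd : (M⁻¹).PosDef := hM.inv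
  have hX : (0:ℝ) < x ⬝ᵥ x := by
    have := dotProduct_self_star_pos_iff (v := x) |>.mpr hx
    simpa using this
  set X : ℝ := x ⬝ᵥ x with hXdef
  set y : Fin m → ℝ := K *ᵥ x with hy
  -- bounds in product form
  have hKx1 : d₁ * h ^ 2 * X ≤ x ⬝ᵥ y := (le_div_iff₀ hX).mp (hKbound x hx).1
  have hKx2 : x ⬝ᵥ y ≤ d₂ * X := (div_le_iff₀ hX).mp (hKbound x hx).2
  have hxypos : (0:ℝ) < x ⬝ᵥ y :=
    lt_of_lt_of_le (mul_pos (mul_pos hd₁ (pow_pos hh 2)) hX) hKx1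
  have hyne : y ≠ 0 := by
    intro h0
    rw [h0, dotProduct_zero] at hxypos
    exact lt_irrefl 0 hxypos
  have hY : (0:ℝ) < y ⬝ᵥ y := by
    have := dotProduct_self_star_pos_iff (v := y) |>.mpr hyne
    simpa using this
  set z : Fin m → ℝ := M⁻¹ *ᵥ y with hz
  have hMz : M *ᵥ z = y := by
    rw [hz, Matrix.mulVec_mulVec, hMN, Matrix.one_mulVec]
  have hzne : z ≠ 0 := by
    intro h0
    rw [h0, Matrix.mulVec_zero] at hMz
    exact hyne hMz.symm
  have hZ : (0:ℝ) < z ⬝ᵥ z := by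
    have := dotProduct_self_star_pos_iff (v := z) |>.mpr hzne
    simpa using this
  -- Q = y ⬝ᵥ M⁻¹ y
  have hQeq : x ⬝ᵥ ((K * M⁻¹ * K) *ᵥ x) = y ⬝ᵥ (M⁻¹ *ᵥ y) := by
    have : (K * M⁻¹ * K) *ᵥ x = K *ᵥ (M⁻¹ *ᵥ y) := by
      rw [hy, Matrix.mulVec_mulVec, Matrix.mulVec_mulVec]
    rw [this, aux_symm_dot hKsym x (M⁻¹ *ᵥ y), ← hy, dotProduct_comm]
  set Q : ℝ := y ⬝ᵥ (M⁻¹ *ᵥ y) with hQ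
  have hQz : Q = z ⬝ᵥ (M *ᵥ z) := by
    rw [hQ, ← hz, ← hMz, dotProduct_comm]
  clear_value X y z Q
  -- bounds on y and z via M-bounds
  have hMy1 : c₁ * h ^ 2 * (y ⬝ᵥ y) ≤ y ⬝ᵥ (M *ᵥ y) := (le_div_iff₀ hY).mp (hMbound y hyne).1
  have hMy2 : y ⬝ᵥ (M *ᵥ y) ≤ c₂ * h ^ 2 * (y ⬝ᵥ y) := (div_le_iff₀ hY).mp (hMbound y hyne).2
  have hMz1 : c₁ * h ^ 2 * (z ⬝ᵥ z) ≤ z ⬝ᵥ (M *ᵥ z) := (le_div_iff₀ hZ).mp (hMbound z hzne).1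
  have hKy2 : y ⬝ᵥ (K *ᵥ y) ≤ d₂ * (y ⬝ᵥ y) := (div_le_iff₀ hY).mp (hKbound y hyne).2
  -- lower bound on y⬝y : CS plain with x,y
  have hyy_low : d₁ ^ 2 * h ^ 4 * X ≤ y ⬝ᵥ y := by
    have hcs := aux_cs' x y
    have h1 : (d₁ * h ^ 2 * X) ^ 2 ≤ (x ⬝ᵥ y) ^ 2 :=
      pow_le_pow_left₀ (mul_pos (mul_pos hd₁ (pow_pos hh 2)) hX).le hKx1 2
    nlinarith [h1, hcs, hX, hY]
  -- upper bound on y⬝y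
  have hyy_up : y ⬝ᵥ y ≤ d₂ ^ 2 * X := by
    have hcs := aux_cs hK.posSemidef x y
    have hxky : x ⬝ᵥ (K *ᵥ y) = y ⬝ᵥ y := by
      rw [aux_symm_dot hKsym x y, ← hy]
    rw [hxky, ← hy] at hcs
    have hKy1 : d₁ * h ^ 2 * (y ⬝ᵥ y) ≤ y ⬝ᵥ (K *ᵥ y) := (le_div_iff₀ hY).mp (hKbound y hyne).1
    have h2 : (x ⬝ᵥ y) * (y ⬝ᵥ (K *ᵥ y)) ≤ (d₂ * X) * (d₂ * (y ⬝ᵥ y)) := by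
      apply mul_le_mul hKx2 hKy2 (by nlinarith [hKy1, hY]) (mul_pos hd₂ hX).le
    nlinarith [hcs, h2, hY]
  -- M⁻¹ Rayleigh bounds
  have hQlow : (y ⬝ᵥ y) ^ 2 ≤ (c₂ * h ^ 2 * (y ⬝ᵥ y)) * Q := by
    have hcs := aux_cs hM.posSemidef y z
    rw [hMz] at hcs
    have h1 : z ⬝ᵥ y = Q := by rw [hQ, hz, dotProduct_comm]
    calc (y ⬝ᵥ y) ^ 2 ≤ (y ⬝ᵥ (M *ᵥ y)) * (z ⬝ᵥ y) := hcs
      _ = (y ⬝ᵥ (M *ᵥ y)) * Q := by rw [h1]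
      _ ≤ (c₂ * h ^ 2 * (y ⬝ᵥ y)) * Q := by
          have hQnn : 0 ≤ Q := by rw [hQz]; linarith [hMz1, mul_pos (mul_pos hc₁ (pow_pos hh 2)) hZ]
          exact mul_le_mul_of_nonneg_right hMy2 hQnn
  have hQup : Q ≤ (y ⬝ᵥ y) / (c₁ * h ^ 2) := by
    have hcs := aux_cs' z (M *ᵥ z)
    rw [hMz] at hcs
    have h1 : z ⬝ᵥ y = Q := by rw [hQ, hz, dotProduct_comm]
    rw [h1] at hcs
    -- Q^2 ≤ (z⬝z)(y⬝y), c₁h² z⬝z ≤ Q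
    have hQpos : 0 < Q := by
      rw [hQz]; exact lt_of_lt_of_le (mul_pos (mul_pos hc₁ (pow_pos hh 2)) hZ) hMz1
    rw [le_div_iff₀ (mul_pos hc₁ (pow_pos hh 2))]
    rw [← hQz] at hMz1
    nlinarith [hcs, hMz1, hQpos, hY]
  -- conclude
  rw [hQeq]
  have hQlow' : d₁ ^ 2 * h ^ 2 / c₂ * X ≤ Q := by
    have hYpos := hY
    have hc2h : (0:ℝ) < c₂ * h ^ 2 := mul_pos hc₂ (pow_pos hh 2)
    have hQge : (y ⬝ᵥ y) / (c₂ * h ^ 2) ≤ Q := by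
      rw [div_le_iff₀ hc2h]
      nlinarith [hQlow, hY]
    calc d₁ ^ 2 * h ^ 2 / c₂ * X = (d₁ ^ 2 * h ^ 4 * X) / (c₂ * h ^ 2) := by
          field_simp
      _ ≤ (y ⬝ᵥ y) / (c₂ * h ^ 2) := by
          gcongr
      _ ≤ Q := hQge
  have hQup' : Q ≤ d₂ ^ 2 / (c₁ * h ^ 2) * X := by
    have hc1h : (0:ℝ) < c₁ * h ^ 2 := mul_pos hc₁ (pow_pos hh 2)
    calc Q ≤ (y ⬝ᵥ y) / (c₁ * h ^ 2) := hQup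
      _ ≤ (d₂ ^ 2 * X) / (c₁ * h ^ 2) := by
          gcongr
      _ = d₂ ^ 2 / (c₁ * h ^ 2) * X := by ring
  constructor
  · rw [le_div_iff₀ hX]; exact hQlow'
  · rw [div_le_iff₀ hX]; exact hQup'
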